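/- arXiv:2503.12987 — 2 statements merged into one kernel-verified Lean document; each statement's English description precedes it below -/
import Mathlib

section
/- Let a ≤ b be real numbers, let u : ℝ → ℝ be continuous on [a,b], let x : ℝ → ℝ have derivative u(t) at every t ∈ [a,b], and let μ be the occupation measure of the trajectory, i.e. the pushforward of Lebesgue measure restricted to [a,b] under the map t ↦ (t, x(t), u(t)), a measure on ℝ³. Then for every continuously differentiable v : ℝ × ℝ → ℝ, ∫_{ℝ³} (∂v/∂t(t,x) + ∂v/∂x(t,x)·u) dμ(t,x,u) = v(b, x(b)) - v(a, x(a)). -/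
open MeasureTheory

/-- Weak Liouville equation for occupation measures: if `μ` is the pushforward of
Lebesgue measure on `[a,b]` under `t ↦ (t, x t, u t)`, where `x` has derivative
`u t` at every `t ∈ [a,b]` and `u` is continuous on `[a,b]`, then for every `C¹`
test function `v`,
`∫ (∂v/∂t(t,x) + ∂v/∂x(t,x)·u) dμ(t,x,u) = v(b, x(b)) - v(a, x(a))`. -/
theorem occupation_measure_liouville
    (a b : ℝ) (hab : a ≤ b) (u x : ℝ → ℝ)
    (hu : ContinuousOn u (Set.Icc a b))
    (hx : ∀ t ∈ Set.Icc a b, HasDerivAt x (u t) t)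
    (μ : Measure (ℝ × ℝ × ℝ))
    (hμ : μ = Measure.map (fun t => (t, x t, u t)) (volume.restrict (Set.Icc a b)))
    (v : ℝ × ℝ → ℝ) (hv : ContDiff ℝ 1 v) :
    ∫ p : ℝ × ℝ × ℝ,
        (fderiv ℝ v (p.1, p.2.1) (1, 0) + fderiv ℝ v (p.1, p.2.1) (0, 1) * p.2.2) ∂μ
      = v (b, x b) - v (a, x a) := by
  have hxc : ContinuousOn x (Set.Icc a b) := fun t ht => (hx t ht).continuousAt.continuousWithinAt
  have hfd : Continuous (fderiv ℝ v) := hv.continuous_fderiv one_ne_zero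
  have hmap : AEMeasurable (fun t => (t, x t, u t)) (volume.restrict (Set.Icc a b)) :=
    measurable_id.aemeasurable.prodMk
      ((hxc.aemeasurable measurableSet_Icc).prodMk (hu.aemeasurable measurableSet_Icc))
  have h1 : Continuous (fun p : ℝ × ℝ × ℝ => fderiv ℝ v (p.1, p.2.1)) :=
    hfd.comp (continuous_fst.prodMk (continuous_fst.comp continuous_snd))
  have hfc : Continuous (fun p : ℝ × ℝ × ℝ =>
      fderiv ℝ v (p.1, p.2.1) (1, 0) + fderiv ℝ v (p.1, p.2.1) (0, 1) * p.2.2) :=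
    (h1.clm_apply continuous_const).add
      ((h1.clm_apply continuous_const).mul (continuous_snd.comp continuous_snd))
  rw [hμ, integral_map hmap hfc.aestronglyMeasurable]
  simp only
  rw [MeasureTheory.integral_Icc_eq_integral_Ioc, ← intervalIntegral.integral_of_le hab]
  -- continuity of the integrand on [a,b]
  have hgc : ContinuousOn
      (fun t => fderiv ℝ v (t, x t) (1, 0) + fderiv ℝ v (t, x t) (0, 1) * u t)
      (Set.Icc a b) := by
    have hc : ContinuousOn (fun t => fderiv ℝ v (t, x t)) (Set.Icc a b) :=
      hfd.comp_continuousOn (continuousOn_id.prodMk hxc)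
    exact (hc.clm_apply continuousOn_const).add
      ((hc.clm_apply continuousOn_const).mul hu)
  apply intervalIntegral.integral_eq_sub_of_hasDerivAt
  · intro t ht
    rw [Set.uIcc_of_le hab] at ht
    have hdv : HasFDerivAt v (fderiv ℝ v (t, x t)) (t, x t) :=
      (hv.differentiable one_ne_zero (t, x t)).hasFDerivAt
    have hcomp : HasDerivAt (fun s => (s, x s)) ((1 : ℝ), u t) t :=
      (hasDerivAt_id t).prodMk (hx t ht)
    have hder := hdv.comp_hasDerivAt t hcomp
    convert hder using 1
    · rfl
    have heq : ((1 : ℝ), u t) = ((1 : ℝ), (0 : ℝ)) + u t • ((0 : ℝ), (1 : ℝ)) := by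
      simp
    rw [heq, map_add, (fderiv ℝ v (t, x t)).map_smul]
    simp [mul_comm]
  · exact ContinuousOn.intervalIntegrable (by rwa [Set.uIcc_of_le hab])
end

section
/- (Bounded mass.) Let r be an even positive integer, a ≤ b, x₋ ≤ x₊, x_a, x_b, C real numbers, and let ν be a finite Borel measure on ℝ⁴ (coordinates (t,x,z,w)) such that ν-almost everywhere t ∈ [a,b], x ∈ [x₋,x₊], z^r + w^r = 1 and w ≥ 0. Assume that for every continuously differentiable v : ℝ × ℝ → ℝ the function (t,x,z,w) ↦ w^r·∂v/∂t(t,x) + z·w^{r-1}·∂v/∂x(t,x) is ν-integrable with ∫ (w^r·∂v/∂t(t,x) + z·w^{r-1}·∂v/∂x(t,x)) dν = v(b, x_b) - v(a, x_a), and that ∫ z^r dν ≤ C. Then the total mass of ν satisfies ν(ℝ⁴) ≤ C + b - a. -/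
open MeasureTheory

/-- Bounded mass: any finite Borel measure `ν` supported (a.e.) on
`[a,b] × [x₋,x₊] × B_r` which satisfies the weak polynomial-data Liouville
constraint and the moment constraint `∫ z^r dν ≤ C` has total mass at most
`C + b - a`. -/
theorem mass_bound
    (r : ℕ) (hr : 0 < r) (hre : Even r)
    (a b xlo xhi xa xb C : ℝ) (hab : a ≤ b) (hx : xlo ≤ xhi)
    (ν : Measure (ℝ × ℝ × ℝ × ℝ)) [IsFiniteMeasure ν]
    (hae : ∀ᵐ q ∂ν, q.1 ∈ Set.Icc a b ∧ q.2.1 ∈ Set.Icc xlo xhi ∧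
      q.2.2.1 ^ r + q.2.2.2 ^ r = 1 ∧ 0 ≤ q.2.2.2)
    (hLiouville : ∀ v : ℝ × ℝ → ℝ, ContDiff ℝ 1 v →
      Integrable (fun q : ℝ × ℝ × ℝ × ℝ =>
        q.2.2.2 ^ r * fderiv ℝ v (q.1, q.2.1) (1, 0)
          + q.2.2.1 * q.2.2.2 ^ (r - 1) * fderiv ℝ v (q.1, q.2.1) (0, 1)) ν ∧
      ∫ q : ℝ × ℝ × ℝ × ℝ,
          (q.2.2.2 ^ r * fderiv ℝ v (q.1, q.2.1) (1, 0)
            + q.2.2.1 * q.2.2.2 ^ (r - 1) * fderiv ℝ v (q.1, q.2.1) (0, 1)) ∂ν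
        = v (b, xb) - v (a, xa))
    (hmom : ∫ q : ℝ × ℝ × ℝ × ℝ, q.2.2.1 ^ r ∂ν ≤ C) :
    (ν Set.univ).toReal ≤ C + b - a := by
  -- Use the test function v(t,x) = t.
  have hv : ContDiff ℝ 1 (fun p : ℝ × ℝ => p.1) := contDiff_fst
  obtain ⟨hint, heq⟩ := hLiouville (fun p : ℝ × ℝ => p.1) hv
  have hfd : ∀ p : ℝ × ℝ, fderiv ℝ (fun p : ℝ × ℝ => p.1) p
      = ContinuousLinearMap.fst ℝ ℝ ℝ := fun p => fderiv_fst
  -- simplify the integrand to w^r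
  have hintegrand : (fun q : ℝ × ℝ × ℝ × ℝ =>
      q.2.2.2 ^ r * fderiv ℝ (fun p : ℝ × ℝ => p.1) (q.1, q.2.1) (1, 0)
        + q.2.2.1 * q.2.2.2 ^ (r - 1) * fderiv ℝ (fun p : ℝ × ℝ => p.1) (q.1, q.2.1) (0, 1))
      = fun q : ℝ × ℝ × ℝ × ℝ => q.2.2.2 ^ r := by
    funext q
    rw [hfd]
    simp
  rw [hintegrand] at hint heq
  simp only at heq
  -- integrability of z^r : it is a.e. in [0,1]
  have hzb : ∀ᵐ q ∂ν, ‖(fun q : ℝ × ℝ × ℝ × ℝ => q.2.2.1 ^ r) q‖ ≤ 1 := by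
    filter_upwards [hae] with q hq
    have hz : 0 ≤ q.2.2.1 ^ r := hre.pow_nonneg _
    have hw : 0 ≤ q.2.2.2 ^ r := pow_nonneg hq.2.2.2 r
    have := hq.2.2.1
    rw [Real.norm_eq_abs, abs_of_nonneg hz]
    linarith
  have hzm : AEStronglyMeasurable (fun q : ℝ × ℝ × ℝ × ℝ => q.2.2.1 ^ r) ν :=
    (measurable_fst.comp (measurable_snd.comp measurable_snd)).pow_const r
      |>.aestronglyMeasurable
  have hintz : Integrable (fun q : ℝ × ℝ × ℝ × ℝ => q.2.2.1 ^ r) ν :=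
    Integrable.mono' (integrable_const 1) hzm hzb
  -- total mass = ∫ (z^r + w^r)
  have hmass : (ν Set.univ).toReal
      = ∫ q : ℝ × ℝ × ℝ × ℝ, (q.2.2.1 ^ r + q.2.2.2 ^ r) ∂ν := by
    have h1 : (∫ q : ℝ × ℝ × ℝ × ℝ, (1 : ℝ) ∂ν)
        = ∫ q : ℝ × ℝ × ℝ × ℝ, (q.2.2.1 ^ r + q.2.2.2 ^ r) ∂ν := by
      refine integral_congr_ae ?_
      filter_upwards [hae] with q hq
      exact hq.2.2.1.symm
    simp at h1
    exact h1
  rw [hmass, integral_add hintz hint, heq]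
  linarith
end
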